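/- Let G be a compact topological group acting continuously by ring automorphisms on a commutative ring A endowed with the discrete topology. Let R be an integral domain and let σ, τ : A → R be ring homomorphisms whose restrictions to the fixed subring A^G coincide. Then there exists g ∈ G such that τ = σ ∘ g (i.e. τ(a) = σ(g • a) for all a ∈ A). -/

import Mathlib

open Polynomial

/-- Key algebraic lemma: if `z` has finite orbit and `φ ψ` agree on invariants,
then `ψ z = φ w` for some orbit element `w`. -/
lemma key_lemma {G B S : Type*} [Group G] [CommRing B] [CommRing S] [IsDomain S]
    [MulSemiringAction G B] (φ ψ : B →+* S)
    (hfix : ∀ b : B, (∀ g : G, g • b = b) → φ b = ψ b)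
    (z : B) (hz : (MulAction.orbit G z).Finite) :
    ∃ g : G, ψ z = φ (g • z) := by
  classical
  set O : Finset B := hz.toFinset with hO
  have hzO : z ∈ O := by
    simp [hO, MulAction.mem_orbit_self]
  have hstable : ∀ (g : G) (w : B), w ∈ O → g • w ∈ O := by
    intro g w hw
    simp only [hO, Set.Finite.mem_toFinset] at hw ⊢
    obtain ⟨g', rfl⟩ := hw
    exact ⟨g * g', by simp [mul_smul]⟩
  set p : Polynomial B := ∏ w ∈ O, (X - C w) with hp
  -- coefficients of `p` are `G`-invariant
  have hinv : ∀ n : ℕ, ∀ g : G, g • p.coeff n = p.coeff n := by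
    intro n g
    have hmap : p.map (MulSemiringAction.toRingHom G B g) = p := by
      rw [hp, Polynomial.map_prod]
      have : ∀ w ∈ O, (X - C w).map (MulSemiringAction.toRingHom G B g)
          = X - C (g • w) := by
        intro w _
        simp [Polynomial.map_sub]
      rw [Finset.prod_congr rfl this]
      -- reindex the product via the bijection `w ↦ g • w` of `O`
      refine Finset.prod_nbij' (fun w => g • w) (fun w => g⁻¹ • w) ?_ ?_ ?_ ?_ ?_
      · intro w hw; exact hstable g w hw
      · intro w hw; exact hstable g⁻¹ w hw
      · intro w _; simp
      · intro w _; simp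
      · intro w _; rfl
    calc g • p.coeff n = (p.map (MulSemiringAction.toRingHom G B g)).coeff n := by
          rw [Polynomial.coeff_map]; rfl
      _ = p.coeff n := by rw [hmap]
  have hmapeq : p.map φ = p.map ψ := by
    ext n
    rw [Polynomial.coeff_map, Polynomial.coeff_map]
    exact hfix _ (hinv n)
  have heval : p.eval z = 0 := by
    rw [hp, Polynomial.eval_prod]
    exact Finset.prod_eq_zero hzO (by simp)
  have h0 : (p.map φ).eval (ψ z) = 0 := by
    rw [hmapeq, Polynomial.eval_map, Polynomial.eval₂_at_apply, heval, map_zero]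
  rw [hp, Polynomial.map_prod, Polynomial.eval_prod] at h0
  obtain ⟨w, hwO, hw0⟩ := Finset.prod_eq_zero_iff.mp h0
  simp only [Polynomial.map_sub, Polynomial.map_X, Polynomial.map_C, Polynomial.eval_sub,
    Polynomial.eval_X, Polynomial.eval_C, sub_eq_zero] at hw0
  rw [hO, Set.Finite.mem_toFinset] at hwO
  obtain ⟨g, rfl⟩ := hwO
  exact ⟨g, hw0⟩

/-- **Tate's lemma.** Let `G` be a compact topological group acting continuously by ring
automorphisms on a commutative ring `A` endowed with the discrete topology. If `σ τ : A →+* R`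
are ring homomorphisms into a domain `R` that agree on the fixed subring `A^G`, then there is
`g ∈ G` with `τ = σ ∘ g`. -/
theorem stmt_0 {G A R : Type*} [Group G] [TopologicalSpace G] [IsTopologicalGroup G]
    [CompactSpace G] [CommRing A] [TopologicalSpace A] [DiscreteTopology A]
    [MulSemiringAction G A] [ContinuousSMul G A]
    [CommRing R] [IsDomain R] (σ τ : A →+* R)
    (h : ∀ a : A, (∀ g : G, g • a = a) → σ a = τ a) :
    ∃ g : G, ∀ a : A, τ a = σ (g • a) := by
  classical
  -- every orbit in `A` is finite
  have horb : ∀ a : A, (MulAction.orbit G a).Finite := by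
    intro a
    have hc : Continuous (fun g : G => g • a) :=
      continuous_id.smul continuous_const
    have : IsCompact (Set.range fun g : G => g • a) :=
      isCompact_range hc
    exact this.finite_of_discrete
  -- the candidate sets
  set Z : A → Set G := fun a => {g : G | τ a = σ (g • a)} with hZ
  have hclosed : ∀ a : A, IsClosed (Z a) := by
    intro a
    have hc : Continuous (fun g : G => g • a) :=
      continuous_id.smul continuous_const
    have : Z a = (fun g : G => g • a) ⁻¹' {b : A | τ a = σ b} := rfl
    rw [this]
    exact (isClosed_discrete _).preimage hc
  -- finite intersection property, via polynomials
  have hFIP : ∀ t : Finset A, (⋂ a ∈ t, Z a).Nonempty := by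
    intro t
    set l := t.toList with hl
    set n := l.length with hn
    set q : Polynomial A := ∑ i ∈ Finset.range n, C (l.getD i 0) * X ^ i with hq
    have hcoeff : ∀ i, i < n → q.coeff i = l.getD i 0 := by
      intro i hi
      rw [hq, Polynomial.finset_sum_coeff]
      rw [Finset.sum_eq_single i]
      · simp
      · intro j _ hji
        simp only [Polynomial.coeff_C_mul, Polynomial.coeff_X_pow]
        rw [if_neg (fun hc => hji hc.symm), mul_zero]
      · intro hni; exact absurd (Finset.mem_range.mpr hi) hni
    -- orbit of `q` is finite
    have hqorb : (MulAction.orbit G q).Finite := by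
      have hsub : MulAction.orbit G q ⊆
          (fun v : Fin n → A => ∑ i : Fin n, C (v i) * X ^ (i : ℕ)) ''
            (Set.univ.pi fun i : Fin n => MulAction.orbit G (q.coeff i)) := by
        rintro _ ⟨g, rfl⟩
        refine ⟨fun i => g • q.coeff (i : ℕ), fun i _ => ⟨g, rfl⟩, ?_⟩
        -- `g • q = ∑ C (g • coeff i) X^i`
        ext m
        rw [Polynomial.coeff_smul, Polynomial.finset_sum_coeff]
        by_cases hm : m < n
        · rw [Finset.sum_eq_single (⟨m, hm⟩ : Fin n)]
          · simp
          · intro j _ hji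
            have hne : (j : ℕ) ≠ m := by
              intro hc; apply hji; ext; exact hc
            simp only [Polynomial.coeff_C_mul, Polynomial.coeff_X_pow]
            rw [if_neg (fun hc => hne hc.symm), mul_zero]
          · simp
        · have h1 : q.coeff m = 0 := by
            rw [hq, Polynomial.finset_sum_coeff]
            refine Finset.sum_eq_zero fun j hj => ?_
            have hne : j ≠ m := by
              intro hc; exact hm (hc ▸ Finset.mem_range.mp hj)
            simp only [Polynomial.coeff_C_mul, Polynomial.coeff_X_pow]
            rw [if_neg (fun hc => hne hc.symm), mul_zero]
          rw [h1, smul_zero]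
          have hsum : ∀ j : Fin n, j ∈ (Finset.univ : Finset (Fin n)) →
              (C ((fun i : Fin n => g • q.coeff (i : ℕ)) j) * X ^ (j : ℕ)).coeff m = 0 := by
            intro j _
            have hne : (j : ℕ) ≠ m := fun hc => hm (hc ▸ j.isLt)
            simp only [Polynomial.coeff_C_mul, Polynomial.coeff_X_pow]
            rw [if_neg (fun hc => hne hc.symm), mul_zero]
          exact Finset.sum_eq_zero hsum
      refine Set.Finite.subset (Set.Finite.image _ (Set.Finite.pi ?_)) hsub
      intro i
      exact horb _
    obtain ⟨g, hg⟩ := key_lemma (G := G) (Polynomial.mapRingHom σ) (Polynomial.mapRingHom τ)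
      (fun b hb => by
        ext m
        simp only [Polynomial.coe_mapRingHom, Polynomial.coeff_map]
        refine h _ (fun g => ?_)
        have := congrArg (fun p : Polynomial A => p.coeff m) (hb g)
        simpa [Polynomial.coeff_smul] using this) q hqorb
    refine ⟨g, ?_⟩
    simp only [Set.mem_iInter]
    intro a ha
    have hmem : a ∈ l := by rw [hl]; exact Finset.mem_toList.mpr ha
    obtain ⟨i, hi, hia⟩ := List.mem_iff_getElem.mp hmem
    have hia' : q.coeff i = a := by
      rw [hcoeff i hi, List.getD_eq_getElem l 0 hi, hia]
    have := congrArg (fun p : Polynomial R => p.coeff i) hg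
    simp only [Polynomial.coe_mapRingHom, Polynomial.coeff_map, Polynomial.coeff_smul] at this
    rw [hia'] at this
    exact this
  -- compactness
  by_contra hcon
  push_neg at hcon
  have hempty : (Set.univ : Set G) ∩ ⋂ a : A, Z a = ∅ := by
    rw [Set.univ_inter]
    ext g
    simp only [Set.mem_iInter, Set.mem_empty_iff_false, iff_false]
    intro hg
    obtain ⟨a, ha⟩ := hcon g
    exact ha (hg a)
  obtain ⟨t, ht⟩ := isCompact_univ.elim_finite_subfamily_closed Z hclosed hempty
  rw [Set.univ_inter] at ht
  obtain ⟨g, hg⟩ := hFIP t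
  rw [ht] at hg
  exact hg
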